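/- Let V be a word consisting of u North steps and d South steps, and let H be a word consisting of r East steps and l West steps. For every integer k, the number of shuffles (interleavings) of V and H whose signed peak-count equals k is C(r+u, u−k) · C(l+d, d+k), where C(a,b) denotes the binomial coefficient, taken to be 0 unless 0 ≤ b ≤ a. -/

import Mathlib

inductive Step : Type
  | E | W | N | S
deriving DecidableEq, Repr

open Step

def isVert : Step → Bool
  | N => true
  | S => true
  | _ => false

def isHoriz : Step → Bool
  | E => true
  | W => true
  | _ => false

def IsShuffle (V H σ : List Step) : Prop :=
  σ.filter isVert = V ∧ σ.filter isHoriz = H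

def pairs (σ : List Step) : List (Step × Step) := σ.zip σ.tail

def signedPeak (σ : List Step) : ℤ :=
  (((pairs σ).filter (fun p => decide (p.1 = N ∧ p.2 = W))).length : ℤ)
  - (((pairs σ).filter (fun p => decide (p.1 = E ∧ p.2 = S))).length : ℤ)

def peakCount (σ : List Step) : ℕ :=
  ((pairs σ).filter (fun p => decide (p.1 = N ∧ p.2 = W))).length
  + ((pairs σ).filter (fun p => decide (p.1 = E ∧ p.2 = S))).length

def zch (a b : ℤ) : ℕ := if 0 ≤ b ∧ b ≤ a then a.toNat.choose b.toNat else 0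

section Aux

lemma horiz_not_vert {s : Step} (h : isHoriz s = true) : isVert s = false := by
  cases s <;> simp_all [isVert, isHoriz]

lemma vert_not_horiz {s : Step} (h : isVert s = true) : isHoriz s = false := by
  cases s <;> simp_all [isVert, isHoriz]

lemma not_vert_horiz {s : Step} (h : isVert s = false) : isHoriz s = true := by
  cases s <;> simp_all [isVert, isHoriz]

lemma not_horiz_vert {s : Step} (h : isHoriz s = false) : isVert s = true := by
  cases s <;> simp_all [isVert, isHoriz]

def shuf : List Step → List Step → List (List Step)
  | [], H => [H]
  | v :: V, [] => [v :: V]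
  | v :: V, h :: H => ((shuf V (h :: H)).map (v :: ·)) ++ ((shuf (v :: V) H).map (h :: ·))
termination_by V H => V.length + H.length

lemma shuf_nil_right (V : List Step) : shuf V [] = [V] := by
  cases V <;> simp [shuf]

lemma mem_shuf : ∀ V H σ : List Step, (∀ s ∈ V, isVert s = true) → (∀ s ∈ H, isHoriz s = true) →
    (σ ∈ shuf V H ↔ IsShuffle V H σ) := by
  intro V H
  induction V, H using shuf.induct with
  | case1 H =>
    intro σ _ hH
    simp only [shuf, List.mem_singleton, IsShuffle]
    constructor
    · rintro rfl
      constructor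
      · exact List.filter_eq_nil_iff.mpr (fun s hs => by simp [horiz_not_vert (hH s hs)])
      · exact List.filter_eq_self.mpr hH
    · rintro ⟨h1, h2⟩
      have : σ.filter isHoriz = σ := List.filter_eq_self.mpr (by
        intro s hs
        by_contra hc
        have hv : isVert s = true := not_horiz_vert (by simpa using hc)
        have : s ∈ σ.filter isVert := List.mem_filter.mpr ⟨hs, hv⟩
        rw [h1] at this; simp at this)
      rw [← this, h2]
  | case2 v V =>
    intro σ hV _
    simp only [shuf_nil_right, List.mem_singleton, IsShuffle]
    constructor
    · rintro rfl
      constructor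
      · exact List.filter_eq_self.mpr hV
      · exact List.filter_eq_nil_iff.mpr (fun s hs => by
          have := hV s hs; cases s <;> simp_all [isVert, isHoriz])
    · rintro ⟨h1, h2⟩
      have : σ.filter isVert = σ := List.filter_eq_self.mpr (by
        intro s hs
        by_contra hc
        have hh : isHoriz s = true := not_vert_horiz (by simpa using hc)
        have : s ∈ σ.filter isHoriz := List.mem_filter.mpr ⟨hs, hh⟩
        rw [h2] at this; simp at this)
      rw [← this, h1]
  | case3 v V h H ih1 ih2 =>
    intro σ hV hH
    have hv : isVert v = true := hV v (by simp)
    have hh : isHoriz h = true := hH h (by simp)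
    have hV' : ∀ s ∈ V, isVert s = true := fun s hs => hV s (by simp [hs])
    have hH' : ∀ s ∈ H, isHoriz s = true := fun s hs => hH s (by simp [hs])
    rw [shuf]
    simp only [List.mem_append, List.mem_map]
    constructor
    · rintro (⟨τ, hτ, rfl⟩ | ⟨τ, hτ, rfl⟩)
      · obtain ⟨t1, t2⟩ := (ih1 τ hV' hH).mp hτ
        exact ⟨by simp [List.filter_cons, hv, t1], by simp [List.filter_cons, vert_not_horiz hv, t2]⟩
      · obtain ⟨t1, t2⟩ := (ih2 τ hV hH').mp hτ
        exact ⟨by simp [List.filter_cons, horiz_not_vert hh, t1], by simp [List.filter_cons, hh, t2]⟩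
    · rintro ⟨h1, h2⟩
      cases σ with
      | nil => simp at h1
      | cons a τ =>
        by_cases hav : isVert a = true
        · have ha : a = v := by
            have := h1; simp [List.filter_cons, hav] at this; exact this.1
          subst ha
          have t1 : τ.filter isVert = V := by simpa [List.filter_cons, hav] using h1
          have t2 : τ.filter isHoriz = h :: H := by
            simpa [List.filter_cons, vert_not_horiz hav] using h2
          exact Or.inl ⟨τ, (ih1 τ hV' hH).mpr ⟨t1, t2⟩, rfl⟩
        · have hah : isHoriz a = true := not_vert_horiz (by simpa using hav)
          have ha : a = h := by
            have := h2; simp [List.filter_cons, hah] at this; exact this.1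
          subst ha
          have t2 : τ.filter isHoriz = H := by simpa [List.filter_cons, hah] using h2
          have t1 : τ.filter isVert = v :: V := by
            simpa [List.filter_cons, (by simpa using hav : isVert a = false)] using h1
          exact Or.inr ⟨τ, (ih2 τ hV hH').mpr ⟨t1, t2⟩, rfl⟩

lemma shuf_nodup : ∀ V H : List Step, (∀ s ∈ V, isVert s = true) → (∀ s ∈ H, isHoriz s = true) →
    (shuf V H).Nodup := by
  intro V H
  induction V, H using shuf.induct with
  | case1 H => intro _ _; simp [shuf]
  | case2 v V => intro _ _; simp [shuf_nil_right]
  | case3 v V h H ih1 ih2 =>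
    intro hV hH
    have hv : isVert v = true := hV v (by simp)
    have hh : isHoriz h = true := hH h (by simp)
    have hvh : v ≠ h := by intro e; rw [e] at hv; rw [horiz_not_vert hh] at hv; simp at hv
    rw [shuf]
    refine List.Nodup.append ?_ ?_ ?_
    · exact (ih1 (fun s hs => hV s (by simp [hs])) hH).map (fun a b => by simp)
    · exact (ih2 hV (fun s hs => hH s (by simp [hs]))).map (fun a b => by simp)
    · intro x hx1 hx2
      simp only [List.mem_map] at hx1 hx2
      obtain ⟨τ, _, rfl⟩ := hx1
      obtain ⟨ρ, _, he⟩ := hx2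
      exact hvh (by injection he with e _; exact e.symm)

/-- pair value -/
def pv : Step → Step → ℤ
  | N, W => 1
  | E, S => -1
  | _, _ => 0

def pvo : Option Step → Step → ℤ
  | none, _ => 0
  | some q, c => pv q c

lemma signedPeak_cons_cons (a b : Step) (σ : List Step) :
    signedPeak (a :: b :: σ) = pv a b + signedPeak (b :: σ) := by
  have hp : pairs (a :: b :: σ) = (a, b) :: pairs (b :: σ) := rfl
  simp only [signedPeak, hp, List.filter_cons]
  cases a <;> cases b <;> simp [pv] <;> ring

lemma signedPeak_singleton (a : Step) : signedPeak [a] = 0 := by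
  simp [signedPeak, pairs]

lemma signedPeak_nil : signedPeak [] = 0 := by simp [signedPeak, pairs]

lemma signedPeak_vert (V : List Step) (hV : ∀ s ∈ V, isVert s = true) :
    signedPeak V = 0 := by
  induction V with
  | nil => exact signedPeak_nil
  | cons v V ih =>
    cases V with
    | nil => exact signedPeak_singleton v
    | cons w W =>
      have hv := hV v (by simp)
      have hw := hV w (by simp)
      rw [signedPeak_cons_cons, ih (fun s hs => hV s (by simp [hs]))]
      cases v <;> cases w <;> simp_all [pv, isVert]

lemma signedPeak_horiz (H : List Step) (hH : ∀ s ∈ H, isHoriz s = true) :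
    signedPeak H = 0 := by
  induction H with
  | nil => exact signedPeak_nil
  | cons v V ih =>
    cases V with
    | nil => exact signedPeak_singleton v
    | cons w W =>
      have hv := hH v (by simp)
      have hw := hH w (by simp)
      rw [signedPeak_cons_cons, ih (fun s hs => hH s (by simp [hs]))]
      cases v <;> cases w <;> simp_all [pv, isHoriz]

lemma signedPeak_W_cons (σ : List Step) : signedPeak (W :: σ) = signedPeak σ := by
  cases σ with
  | nil => rw [signedPeak_singleton, signedPeak_nil]
  | cons b τ => rw [signedPeak_cons_cons]; cases b <;> simp [pv]

lemma signedPeak_S_cons (σ : List Step) : signedPeak (S :: σ) = signedPeak σ := by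
  cases σ with
  | nil => rw [signedPeak_singleton, signedPeak_nil]
  | cons b τ => rw [signedPeak_cons_cons]; cases b <;> simp [pv]

-- zch lemmas
lemma zch_neg {a b : ℤ} (h : b < 0) : zch a b = 0 := by
  simp only [zch]; rw [if_neg]; omega

lemma zch_gt {a b : ℤ} (h : a < b) : zch a b = 0 := by
  simp only [zch]; rw [if_neg]; omega

lemma zch_self {a : ℤ} (h : 0 ≤ a) : zch a a = 1 := by
  simp only [zch]
  rw [if_pos (show (0:ℤ) ≤ a ∧ a ≤ a from ⟨h, le_refl a⟩)]
  exact Nat.choose_self _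

lemma zch_zero {a : ℤ} (h : 0 ≤ a) : zch a 0 = 1 := by
  simp only [zch]
  rw [if_pos (show (0:ℤ) ≤ (0:ℤ) ∧ (0:ℤ) ≤ a from ⟨le_refl _, h⟩)]
  simp

lemma zch_natCast (m c : ℕ) : zch (m : ℤ) (c : ℤ) = if c ≤ m then m.choose c else 0 := by
  simp only [zch]
  rcases le_or_gt c m with h | h
  · rw [if_pos ⟨by positivity, by exact_mod_cast h⟩, if_pos h]
    simp
  · rw [if_neg (by push_cast; omega), if_neg (by omega)]

lemma zch_pascal (a b : ℤ) (ha : 0 ≤ a) : zch (a + 1) b = zch a b + zch a (b - 1) := by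
  obtain ⟨m, rfl⟩ := Int.eq_ofNat_of_zero_le ha
  rcases lt_or_ge b 0 with hb | hb
  · rw [zch_neg hb, zch_neg hb, zch_neg (by omega)]
  obtain ⟨c, rfl⟩ := Int.eq_ofNat_of_zero_le hb
  have h1 : (m : ℤ) + 1 = ((m + 1 : ℕ) : ℤ) := by push_cast; ring
  cases c with
  | zero =>
    rw [h1, zch_natCast, zch_natCast, zch_neg (by norm_num)]
    simp
  | succ c' =>
    have h2 : ((c' + 1 : ℕ) : ℤ) - 1 = ((c' : ℕ) : ℤ) := by push_cast; ring
    rw [h1, h2, zch_natCast, zch_natCast, zch_natCast]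
    split_ifs with ha1 ha2 ha3 <;> try omega
    · rw [Nat.choose_succ_succ']
      ring
    · have hc : c' = m := by omega
      subst hc
      simp

lemma zch_diag (u d k : ℤ) (hu : 0 ≤ u) (hd : 0 ≤ d) :
    zch u (u - k) * zch d (d + k) = if k = 0 then 1 else 0 := by
  rcases lt_trichotomy k 0 with h | h | h
  · rw [zch_gt (by omega), if_neg (by omega)]; ring
  · subst h; rw [if_pos rfl]; simp [zch_self hu, zch_self hd]
  · rw [zch_gt (show d < d + k by omega), if_neg (by omega)]; ring

lemma zch_diag0 (a b k : ℤ) (ha : 0 ≤ a) (hb : 0 ≤ b) :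
    zch a (-k) * zch b k = if k = 0 then 1 else 0 := by
  rcases lt_trichotomy k 0 with h | h | h
  · rw [zch_neg h, if_neg (by omega)]; ring
  · subst h; rw [if_pos rfl]; simp [zch_zero ha, zch_zero hb]
  · rw [zch_neg (by omega), if_neg (by omega)]; ring

lemma pasc_mul_left (a b c d : ℤ) (ha : 0 ≤ a) :
    zch (a + 1) b * zch c d = zch a b * zch c d + zch a (b - 1) * zch c d := by
  rw [zch_pascal a b ha]; ring

lemma pasc_mul_right (a b c d : ℤ) (hc : 0 ≤ c) :
    zch a b * zch (c + 1) d = zch a b * zch c d + zch a b * zch c (d - 1) := by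
  rw [zch_pascal c d hc]; ring

/-- The refined count: shuffles whose signed peak count, after prepending the optional
letter `p`, equals `k`. -/
def Cnt (p : Option Step) (V H : List Step) (k : ℤ) : ℕ :=
  (shuf V H).countP (fun σ => decide (signedPeak (p.elim σ (· :: σ)) = k))

lemma Cnt_cons_cons (p : Option Step) (v h : Step) (V H : List Step) (k : ℤ) :
    Cnt p (v :: V) (h :: H) k
      = Cnt (some v) V (h :: H) (k - pvo p v) + Cnt (some h) (v :: V) H (k - pvo p h) := by
  unfold Cnt
  rw [shuf, List.countP_append, List.countP_map, List.countP_map]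
  congr 1
  all_goals refine List.countP_congr (fun σ _ => ?_)
  all_goals cases p with
    | none => simp [pvo]; exact decide_eq_true_iff
    | some q =>
      simp only [decide_eq_true_iff]
      simp only [Function.comp, Option.elim, pvo, decide_eq_true_eq]
      exact decide_eq_true_iff.trans (by rw [signedPeak_cons_cons]; omega)

lemma Cnt_S (V H : List Step) (k : ℤ) : Cnt (some S) V H k = Cnt none V H k := by
  unfold Cnt
  refine List.countP_congr (fun σ _ => ?_)
  simp [signedPeak_S_cons]; exact decide_eq_true_iff.symm

lemma Cnt_W (V H : List Step) (k : ℤ) : Cnt (some W) V H k = Cnt none V H k := by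
  unfold Cnt
  refine List.countP_congr (fun σ _ => ?_)
  simp [signedPeak_W_cons]; exact decide_eq_true_iff.symm

lemma Cnt_singleton (p : Option Step) (V H : List Step) (τ : List Step)
    (h : shuf V H = [τ]) (k : ℤ) :
    Cnt p V H k = if signedPeak (p.elim τ (· :: τ)) = k then 1 else 0 := by
  unfold Cnt
  rw [h]
  by_cases hc : signedPeak (p.elim τ (· :: τ)) = k <;> simp [hc, List.countP_cons]

end Aux

section Main

/-- Target formula. -/
def Bf (V H : List Step) (k : ℤ) : ℕ :=
  zch ((H.count E : ℤ) + V.count N) ((V.count N : ℤ) - k)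
    * zch ((H.count W : ℤ) + V.count S) ((V.count S : ℤ) + k)

/-- Combined induction statement. -/
def Goals (V H : List Step) : Prop := ∀ k : ℤ,
  Cnt none V H k = Bf V H k
  ∧ Cnt (some N) V H k = (if H.head? = some W then
      zch ((H.count E : ℤ) + V.count N + 1) ((V.count N : ℤ) + 1 - k)
        * zch ((H.count W : ℤ) + V.count S - 1) ((V.count S : ℤ) + k - 1)
    else Bf V H k)
  ∧ Cnt (some E) V H k = (if V.head? = some S then
      zch ((H.count E : ℤ) + V.count N + 1) ((V.count N : ℤ) - k)
        * zch ((H.count W : ℤ) + V.count S - 1) ((V.count S : ℤ) + k)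
    else Bf V H k)

lemma main_nil_left (H : List Step) (hH : ∀ s ∈ H, isHoriz s = true) (k : ℤ) :
    Cnt none [] H k = Bf [] H k
    ∧ Cnt (some N) [] H k = (if H.head? = some W then
        zch ((H.count E : ℤ) + 1) (1 - k) * zch ((H.count W : ℤ) - 1) (k - 1)
      else Bf [] H k)
    ∧ Cnt (some E) [] H k = Bf [] H k := by
  have hs : shuf [] H = [H] := by cases H <;> simp [shuf]
  have hBf : Bf [] H k = if k = 0 then 1 else 0 := by
    unfold Bf
    simp only [List.count_nil]
    push_cast
    rw [show ((H.count E : ℤ) + 0) = (H.count E : ℤ) by ring,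
      show ((H.count W : ℤ) + 0) = (H.count W : ℤ) by ring,
      show ((0 : ℤ) - k) = -k by ring, show ((0 : ℤ) + k) = k by ring]
    exact zch_diag0 _ _ k (by positivity) (by positivity)
  refine ⟨?_, ?_, ?_⟩
  · rw [Cnt_singleton _ _ _ _ hs, hBf]
    simp only [Option.elim, signedPeak_horiz H hH]
    split_ifs <;> omega
  · rw [Cnt_singleton _ _ _ _ hs]
    cases H with
    | nil =>
      rw [if_neg (show ¬(([] : List Step).head? = some W) from by simp), hBf]
      simp only [Option.elim, signedPeak_singleton]
      split_ifs <;> omega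
    | cons h H' =>
      have hsp : signedPeak (N :: h :: H') = pv N h := by
        rw [signedPeak_cons_cons, signedPeak_horiz _ hH]; ring
      cases h with
      | E =>
        have h0 : signedPeak (N :: E :: H') = 0 := by rw [hsp]; rfl
        simp only [Option.elim, h0]
        rw [if_neg (show ¬((E :: H').head? = some W) from by simp), hBf]
        split_ifs <;> omega
      | W =>
        have h0 : signedPeak (N :: W :: H') = 1 := by rw [hsp]; rfl
        simp only [Option.elim, h0]
        rw [if_pos (show (W :: H').head? = some W from rfl)]
        have h1 : ((W :: H').count W : ℤ) - 1 = ((H'.count W : ℕ) : ℤ) := by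
          simp [List.count_cons]
        rw [h1, show (1 : ℤ) - k = -(k - 1) by ring,
          zch_diag0 _ _ (k - 1) (by positivity) (by positivity)]
        split_ifs <;> omega
      | N => exact absurd (hH N (by simp)) (by simp [isHoriz])
      | S => exact absurd (hH S (by simp)) (by simp [isHoriz])
  · rw [Cnt_singleton _ _ _ _ hs, hBf]
    cases H with
    | nil =>
      simp only [Option.elim, signedPeak_singleton]
      split_ifs <;> omega
    | cons h H' =>
      have hsp : signedPeak (E :: h :: H') = pv E h := by
        rw [signedPeak_cons_cons, signedPeak_horiz _ hH]; ring
      have hpv : pv E h = 0 := by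
        have := hH h (by simp)
        cases h <;> simp_all [pv, isHoriz]
      simp only [Option.elim, hsp, hpv]
      split_ifs <;> omega


lemma goals_nil_left (H : List Step) (hH : ∀ s ∈ H, isHoriz s = true) : Goals [] H := by
  intro k
  obtain ⟨h1, h2, h3⟩ := main_nil_left H hH k
  refine ⟨h1, ?_, ?_⟩
  · rw [h2]
    simp only [List.count_nil, Nat.cast_zero, add_zero, zero_add, zero_sub, Int.zero_add]
  · rw [h3, if_neg (by simp)]

lemma goals_nil_right (V : List Step) (hV : ∀ s ∈ V, isVert s = true) : Goals V [] := by
  intro k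
  have hs : shuf V [] = [V] := shuf_nil_right V
  have hBf : Bf V [] k = if k = 0 then 1 else 0 := by
    unfold Bf
    simp only [List.count_nil, Nat.cast_zero, zero_add]
    exact zch_diag _ _ k (by positivity) (by positivity)
  refine ⟨?_, ?_, ?_⟩
  · rw [Cnt_singleton _ _ _ _ hs, hBf]
    simp only [Option.elim, signedPeak_vert V hV]
    split_ifs <;> omega
  · rw [if_neg (by simp), Cnt_singleton _ _ _ _ hs, hBf]
    have h0 : signedPeak (Option.elim (some N) V (· :: V)) = 0 := by
      simp only [Option.elim]
      cases V with
      | nil => exact signedPeak_singleton N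
      | cons v V' =>
        rw [signedPeak_cons_cons, signedPeak_vert _ hV]
        have := hV v (by simp)
        cases v <;> simp_all [pv, isVert]
    rw [h0]
    split_ifs <;> omega
  · rw [Cnt_singleton _ _ _ _ hs]
    cases V with
    | nil =>
      rw [if_neg (show ¬(([] : List Step).head? = some S) from by simp), hBf]
      simp only [Option.elim, signedPeak_singleton]
      split_ifs <;> omega
    | cons v V' =>
      have hsp : signedPeak (E :: v :: V') = pv E v := by
        rw [signedPeak_cons_cons, signedPeak_vert _ hV]; ring
      cases v with
      | N =>
        have h0 : signedPeak (E :: N :: V') = 0 := by rw [hsp]; rfl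
        simp only [Option.elim, h0]
        rw [if_neg (show ¬((N :: V').head? = some S) from by simp), hBf]
        split_ifs <;> omega
      | S =>
        have h0 : signedPeak (E :: S :: V') = -1 := by rw [hsp]; rfl
        simp only [Option.elim, h0]
        rw [if_pos (show (S :: V').head? = some S from rfl)]
        simp only [List.count_nil, Nat.cast_zero, zero_add]
        have hd : 1 ≤ ((S :: V').count S : ℤ) := by
          rw [List.count_cons_self]; push_cast; omega
        rw [show ((List.count N (S :: V') : ℤ)) - k
              = ((List.count N (S :: V') : ℤ) + 1) - (k + 1) from by ring,
          show ((List.count S (S :: V') : ℤ)) + k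
              = ((List.count S (S :: V') : ℤ) - 1) + (k + 1) from by ring,
          zch_diag ((List.count N (S :: V') : ℤ) + 1) ((List.count S (S :: V') : ℤ) - 1)
            (k + 1) (by positivity) (by omega)]
        split_ifs <;> omega
      | E => exact absurd (hV E (by simp)) (by simp [isVert])
      | W => exact absurd (hV W (by simp)) (by simp [isVert])

lemma key0 (a b c d k : ℤ) (ha : 0 ≤ a) (hb : 0 ≤ b) (hc : 0 ≤ c) (hd : 0 ≤ d) :
    zch (1 + a + b) (b - k) * zch (c + d) (k + d) + zch (c + d) (k + d) * zch (1 + a + b) (1 + (b - k)) = zch (c + d) (k + d) * zch (2 + a + b) (1 + (b - k)) := by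
  rw [show (2 + a + b) = (1 + a + b) + 1 from by ring, zch_pascal (1 + a + b) (1 + (b - k)) (by positivity),
    show 1 + (b - k) - 1 = b - k from by ring]
  ring

lemma key3 (a b c d k : ℤ) (ha : 0 ≤ a) (hb : 0 ≤ b) (hc : 0 ≤ c) (hd : 0 ≤ d) :
    zch (1 + a + b) (1 + (b - k)) * zch (c + d) (-1 + k + d) + zch (1 + a + b) (1 + (b - k)) * zch (c + d) (k + d) = zch (1 + a + b) (1 + (b - k)) * zch (1 + c + d) (k + d) := by
  rw [show (1 + c + d) = (c + d) + 1 from by ring, zch_pascal (c + d) (k + d) (by positivity),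
    show k + d - 1 = -1 + k + d from by ring]
  ring

lemma key4 (a b c d k : ℤ) (ha : 0 ≤ a) (hb : 0 ≤ b) (hc : 0 ≤ c) (hd : 0 ≤ d) :
    zch (1 + a + b) (1 + (b - k)) * zch (c + d) (-1 + k + d) + zch (c + d) (-1 + k + d) * zch (1 + a + b) (2 + (b - k)) = zch (c + d) (-1 + k + d) * zch (2 + a + b) (2 + (b - k)) := by
  rw [show (2 + a + b) = (1 + a + b) + 1 from by ring, zch_pascal (1 + a + b) (2 + (b - k)) (by positivity),
    show 2 + (b - k) - 1 = 1 + (b - k) from by ring]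
  ring

lemma key6 (a b c d k : ℤ) (ha : 0 ≤ a) (hb : 0 ≤ b) (hc : 0 ≤ c) (hd : 0 ≤ d) :
    zch (1 + a + b) (b - k) * zch (c + d) (k + d) + zch (1 + a + b) (b - k) * zch (c + d) (1 + k + d) = zch (1 + a + b) (b - k) * zch (1 + c + d) (1 + k + d) := by
  rw [show (1 + c + d) = (c + d) + 1 from by ring, zch_pascal (c + d) (1 + k + d) (by positivity),
    show 1 + k + d - 1 = k + d from by ring]
  ring

lemma key8 (a b c d k : ℤ) (ha : 0 ≤ a) (hb : 0 ≤ b) (hc : 0 ≤ c) (hd : 0 ≤ d) :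
    zch (1 + a + b) (-1 + (b - k)) * zch (c + d) (1 + k + d) + zch (c + d) (1 + k + d) * zch (1 + a + b) (b - k) = zch (c + d) (1 + k + d) * zch (2 + a + b) (b - k) := by
  rw [show (2 + a + b) = (1 + a + b) + 1 from by ring, zch_pascal (1 + a + b) (b - k) (by positivity),
    show b - k - 1 = -1 + (b - k) from by ring]
  ring

lemma key9 (a b c d k : ℤ) (ha : 0 ≤ a) (hb : 0 ≤ b) (hc : 0 ≤ c) (hd : 0 ≤ d) :
    zch (a + b) (b - k) * zch (1 + c + d) (k + d) + zch (a + b) (b - k) * zch (1 + c + d) (1 + k + d) = zch (a + b) (b - k) * zch (2 + c + d) (1 + k + d) := by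
  rw [show (2 + c + d) = (1 + c + d) + 1 from by ring, zch_pascal (1 + c + d) (1 + k + d) (by positivity),
    show 1 + k + d - 1 = k + d from by ring]
  ring

lemma key10 (a b c d k : ℤ) (ha : 0 ≤ a) (hb : 0 ≤ b) (hc : 0 ≤ c) (hd : 0 ≤ d) :
    zch (a + b) (b - k) * zch (1 + c + d) (k + d) + zch (1 + c + d) (k + d) * zch (a + b) (1 + (b - k)) = zch (1 + c + d) (k + d) * zch (1 + a + b) (1 + (b - k)) := by
  rw [show (1 + a + b) = (a + b) + 1 from by ring, zch_pascal (a + b) (1 + (b - k)) (by positivity),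
    show 1 + (b - k) - 1 = b - k from by ring]
  ring

lemma key11 (a b c d k : ℤ) (ha : 0 ≤ a) (hb : 0 ≤ b) (hc : 0 ≤ c) (hd : 0 ≤ d) :
    zch (a + b) (-1 + (b - k)) * zch (1 + c + d) (1 + k + d) + zch (1 + c + d) (1 + k + d) * zch (a + b) (b - k) = zch (1 + c + d) (1 + k + d) * zch (1 + a + b) (b - k) := by
  rw [show (1 + a + b) = (a + b) + 1 from by ring, zch_pascal (a + b) (b - k) (by positivity),
    show b - k - 1 = -1 + (b - k) from by ring]
  ring

lemma goals_all : ∀ n (V H : List Step), V.length + H.length ≤ n →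
    (∀ s ∈ V, isVert s = true) → (∀ s ∈ H, isHoriz s = true) → Goals V H := by
  intro n
  induction n with
  | zero =>
    intro V H hl hV hH
    cases V with
    | nil => exact goals_nil_left H hH
    | cons _ _ => simp at hl
  | succ n ih =>
    intro V H hl hV hH
    cases V with
    | nil => exact goals_nil_left H hH
    | cons v V' =>
    cases H with
    | nil => exact goals_nil_right _ hV
    | cons h H' =>
    have hV' : ∀ s ∈ V', isVert s = true := fun s hs => hV s (by simp [hs])
    have hH' : ∀ s ∈ H', isHoriz s = true := fun s hs => hH s (by simp [hs])
    have IH1 := ih V' (h :: H') (by simp only [List.length_cons] at hl ⊢; omega) hV' hH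
    have IH2 := ih (v :: V') H' (by simp only [List.length_cons] at hl ⊢; omega) hV hH'
    have hv := hV v (by simp)
    have hh := hH h (by simp)
    intro k
    cases v with
    | E => simp [isVert] at hv
    | W => simp [isVert] at hv
    | N =>
      cases h with
      | N => simp [isHoriz] at hh
      | S => simp [isHoriz] at hh
      | E =>
        refine ⟨?_, ?_, ?_⟩
        · 
          rw [Cnt_cons_cons]
          rw [show k - pvo (none) N = k from by norm_num [pvo, pv], show k - pvo (none) E = k from by norm_num [pvo, pv]]
          rw [(IH1 k).2.1]
          rw [if_neg (show ¬((E :: H').head? = some W) from by simp)]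
          rw [(IH2 k).2.2]
          rw [if_neg (show ¬((N :: V').head? = some S) from by simp)]
          unfold Bf
          simp [List.count_cons]
          push_cast
          ring_nf
          have hk := key0 (List.count E H' : ℤ) (List.count N V' : ℤ) (List.count W H' : ℤ) (List.count S V' : ℤ) k (by positivity) (by positivity) (by positivity) (by positivity)
          ring_nf at hk
          linarith [hk]
        · 
          rw [if_neg (show ¬((E :: H').head? = some W) from by simp)]
          rw [Cnt_cons_cons]
          rw [show k - pvo (some N) N = k from by norm_num [pvo, pv], show k - pvo (some N) E = k from by norm_num [pvo, pv]]
          rw [(IH1 k).2.1]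
          rw [if_neg (show ¬((E :: H').head? = some W) from by simp)]
          rw [(IH2 k).2.2]
          rw [if_neg (show ¬((N :: V').head? = some S) from by simp)]
          unfold Bf
          simp [List.count_cons]
          push_cast
          ring_nf
          have hk := key0 (List.count E H' : ℤ) (List.count N V' : ℤ) (List.count W H' : ℤ) (List.count S V' : ℤ) k (by positivity) (by positivity) (by positivity) (by positivity)
          ring_nf at hk
          linarith [hk]
        · 
          rw [if_neg (show ¬((N :: V').head? = some S) from by simp)]
          rw [Cnt_cons_cons]
          rw [show k - pvo (some E) N = k from by norm_num [pvo, pv], show k - pvo (some E) E = k from by norm_num [pvo, pv]]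
          rw [(IH1 k).2.1]
          rw [if_neg (show ¬((E :: H').head? = some W) from by simp)]
          rw [(IH2 k).2.2]
          rw [if_neg (show ¬((N :: V').head? = some S) from by simp)]
          unfold Bf
          simp [List.count_cons]
          push_cast
          ring_nf
          have hk := key0 (List.count E H' : ℤ) (List.count N V' : ℤ) (List.count W H' : ℤ) (List.count S V' : ℤ) k (by positivity) (by positivity) (by positivity) (by positivity)
          ring_nf at hk
          linarith [hk]
      | W =>
        refine ⟨?_, ?_, ?_⟩
        · 
          rw [Cnt_cons_cons]
          rw [show k - pvo (none) N = k from by norm_num [pvo, pv], show k - pvo (none) W = k from by norm_num [pvo, pv]]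
          rw [(IH1 k).2.1]
          rw [if_pos (show (W :: H').head? = some W from rfl)]
          rw [Cnt_W, (IH2 k).1]
          unfold Bf
          simp [List.count_cons]
          push_cast
          ring_nf
          have hk := key3 (List.count E H' : ℤ) (List.count N V' : ℤ) (List.count W H' : ℤ) (List.count S V' : ℤ) k (by positivity) (by positivity) (by positivity) (by positivity)
          ring_nf at hk
          linarith [hk]
        · 
          rw [if_pos (show (W :: H').head? = some W from rfl)]
          rw [Cnt_cons_cons]
          rw [show k - pvo (some N) N = k from by norm_num [pvo, pv], show k - pvo (some N) W = (k - 1) from by norm_num [pvo, pv]]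
          rw [(IH1 k).2.1]
          rw [if_pos (show (W :: H').head? = some W from rfl)]
          rw [Cnt_W, (IH2 (k - 1)).1]
          unfold Bf
          simp [List.count_cons]
          push_cast
          ring_nf
          have hk := key4 (List.count E H' : ℤ) (List.count N V' : ℤ) (List.count W H' : ℤ) (List.count S V' : ℤ) k (by positivity) (by positivity) (by positivity) (by positivity)
          ring_nf at hk
          linarith [hk]
        · 
          rw [if_neg (show ¬((N :: V').head? = some S) from by simp)]
          rw [Cnt_cons_cons]
          rw [show k - pvo (some E) N = k from by norm_num [pvo, pv], show k - pvo (some E) W = k from by norm_num [pvo, pv]]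
          rw [(IH1 k).2.1]
          rw [if_pos (show (W :: H').head? = some W from rfl)]
          rw [Cnt_W, (IH2 k).1]
          unfold Bf
          simp [List.count_cons]
          push_cast
          ring_nf
          have hk := key3 (List.count E H' : ℤ) (List.count N V' : ℤ) (List.count W H' : ℤ) (List.count S V' : ℤ) k (by positivity) (by positivity) (by positivity) (by positivity)
          ring_nf at hk
          linarith [hk]
    | S =>
      cases h with
      | N => simp [isHoriz] at hh
      | S => simp [isHoriz] at hh
      | E =>
        refine ⟨?_, ?_, ?_⟩
        · 
          rw [Cnt_cons_cons]
          rw [show k - pvo (none) S = k from by norm_num [pvo, pv], show k - pvo (none) E = k from by norm_num [pvo, pv]]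
          rw [Cnt_S, (IH1 k).1]
          rw [(IH2 k).2.2]
          rw [if_pos (show (S :: V').head? = some S from rfl)]
          unfold Bf
          simp [List.count_cons]
          push_cast
          ring_nf
          have hk := key6 (List.count E H' : ℤ) (List.count N V' : ℤ) (List.count W H' : ℤ) (List.count S V' : ℤ) k (by positivity) (by positivity) (by positivity) (by positivity)
          ring_nf at hk
          linarith [hk]
        · 
          rw [if_neg (show ¬((E :: H').head? = some W) from by simp)]
          rw [Cnt_cons_cons]
          rw [show k - pvo (some N) S = k from by norm_num [pvo, pv], show k - pvo (some N) E = k from by norm_num [pvo, pv]]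
          rw [Cnt_S, (IH1 k).1]
          rw [(IH2 k).2.2]
          rw [if_pos (show (S :: V').head? = some S from rfl)]
          unfold Bf
          simp [List.count_cons]
          push_cast
          ring_nf
          have hk := key6 (List.count E H' : ℤ) (List.count N V' : ℤ) (List.count W H' : ℤ) (List.count S V' : ℤ) k (by positivity) (by positivity) (by positivity) (by positivity)
          ring_nf at hk
          linarith [hk]
        · 
          rw [if_pos (show (S :: V').head? = some S from rfl)]
          rw [Cnt_cons_cons]
          rw [show k - pvo (some E) S = (k + 1) from by norm_num [pvo, pv], show k - pvo (some E) E = k from by norm_num [pvo, pv]]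
          rw [Cnt_S, (IH1 (k + 1)).1]
          rw [(IH2 k).2.2]
          rw [if_pos (show (S :: V').head? = some S from rfl)]
          unfold Bf
          simp [List.count_cons]
          push_cast
          ring_nf
          have hk := key8 (List.count E H' : ℤ) (List.count N V' : ℤ) (List.count W H' : ℤ) (List.count S V' : ℤ) k (by positivity) (by positivity) (by positivity) (by positivity)
          ring_nf at hk
          linarith [hk]
      | W =>
        refine ⟨?_, ?_, ?_⟩
        · 
          rw [Cnt_cons_cons]
          rw [show k - pvo (none) S = k from by norm_num [pvo, pv], show k - pvo (none) W = k from by norm_num [pvo, pv]]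
          rw [Cnt_S, (IH1 k).1]
          rw [Cnt_W, (IH2 k).1]
          unfold Bf
          simp [List.count_cons]
          push_cast
          ring_nf
          have hk := key9 (List.count E H' : ℤ) (List.count N V' : ℤ) (List.count W H' : ℤ) (List.count S V' : ℤ) k (by positivity) (by positivity) (by positivity) (by positivity)
          ring_nf at hk
          linarith [hk]
        · 
          rw [if_pos (show (W :: H').head? = some W from rfl)]
          rw [Cnt_cons_cons]
          rw [show k - pvo (some N) S = k from by norm_num [pvo, pv], show k - pvo (some N) W = (k - 1) from by norm_num [pvo, pv]]
          rw [Cnt_S, (IH1 k).1]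
          rw [Cnt_W, (IH2 (k - 1)).1]
          unfold Bf
          simp [List.count_cons]
          push_cast
          ring_nf
          have hk := key10 (List.count E H' : ℤ) (List.count N V' : ℤ) (List.count W H' : ℤ) (List.count S V' : ℤ) k (by positivity) (by positivity) (by positivity) (by positivity)
          ring_nf at hk
          linarith [hk]
        · 
          rw [if_pos (show (S :: V').head? = some S from rfl)]
          rw [Cnt_cons_cons]
          rw [show k - pvo (some E) S = (k + 1) from by norm_num [pvo, pv], show k - pvo (some E) W = k from by norm_num [pvo, pv]]
          rw [Cnt_S, (IH1 (k + 1)).1]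
          rw [Cnt_W, (IH2 k).1]
          unfold Bf
          simp [List.count_cons]
          push_cast
          ring_nf
          have hk := key11 (List.count E H' : ℤ) (List.count N V' : ℤ) (List.count W H' : ℤ) (List.count S V' : ℤ) k (by positivity) (by positivity) (by positivity) (by positivity)
          ring_nf at hk
          linarith [hk]

end Main

/-- **Theorem (signed peak-count enumeration).**
If `V` consists of `u` North steps and `d` South steps, and `H` consists of `r` East steps
and `l` West steps, then for every integer `k` the number of shuffles of `V` and `H`
with signed peak-count `k` is `C(r+u, u−k) · C(l+d, d+k)`. -/
theorem signedPeak_enumeration (u d r l : ℕ) (V H : List Step)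
    (hV : ∀ s ∈ V, isVert s = true)
    (hVu : V.count Step.N = u) (hVd : V.count Step.S = d)
    (hH : ∀ s ∈ H, isHoriz s = true)
    (hHr : H.count Step.E = r) (hHl : H.count Step.W = l)
    (k : ℤ) :
    {σ : List Step | IsShuffle V H σ ∧ signedPeak σ = k}.ncard
      = zch ((r : ℤ) + u) ((u : ℤ) - k) * zch ((l : ℤ) + d) ((d : ℤ) + k) := by
  subst hVu hVd hHr hHl
  have h1 := (goals_all (V.length + H.length) V H le_rfl hV hH k).1
  have hset : {σ : List Step | IsShuffle V H σ ∧ signedPeak σ = k}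
      = ↑((shuf V H).filter (fun σ => decide (signedPeak σ = k))).toFinset := by
    ext σ
    simp only [Set.mem_setOf_eq, List.coe_toFinset, List.mem_filter,
      decide_eq_true_eq, mem_shuf V H σ hV hH]
  rw [hset, Set.ncard_coe_finset,
    List.toFinset_card_of_nodup ((shuf_nodup V H hV hH).filter _),
    ← List.countP_eq_length_filter]
  exact h1
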